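/- Let (G, A, P) be an Ising model with pairwise potential f with temperature parameter r^{-1}. Then P satisfies assumption H1: there exists κ_min > 0 (depending only on r) such that for every finite subset V of G, κ_min · ‖P_{i|G} - P_{i|V}‖_∞ ≤ ‖P_{i|G}‖_∞ - ‖P_{i|V}‖_∞. -/

import Mathlib

open MeasureTheory

/-- `g_{i,j}(a,b) = f_{i,j}(a,b) - f_{i,j}(-a,b)`. -/
noncomputable def gpot {G : Type*} (f : G → G → Bool → Bool → ℝ) (i j : G) (a b : Bool) : ℝ :=
  f i j a b - f i j (!a) b

/-- One-point specification of the Ising model: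
`spec f i a y = (1 + exp(-∑_j g_{i,j}(a, y(j))))⁻¹`. -/
noncomputable def spec {G : Type*} (f : G → G → Bool → Bool → ℝ) (i : G) (a : Bool)
    (y : G → Bool) : ℝ :=
  1 / (1 + Real.exp (-(∑' j, gpot f i j a (y j))))

/-- `P` is an Ising model with potential `f` (DLR equations). -/
def IsIsing {G : Type*} [MeasurableSpace (G → Bool)] (f : G → G → Bool → Bool → ℝ)
    (P : Measure (G → Bool)) : Prop :=
  ∀ (i : G) (B : Set (G → Bool)), MeasurableSet B →
    (∀ y z : G → Bool, (∀ j, j ≠ i → y j = z j) → (y ∈ B ↔ z ∈ B)) →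
    ∀ a : Bool, P (B ∩ {y | y i = a}) = ENNReal.ofReal (∫ y in B, spec f i a y ∂P)

/-- `ω_{i,j}(f) = sup_{a,b} (g_{i,j}(a,b) - g_{i,j}(a,-b))`. -/
noncomputable def omegaf {G : Type*} (f : G → G → Bool → Bool → ℝ) (i j : G) : ℝ :=
  ⨆ a : Bool, ⨆ b : Bool, (gpot f i j a b - gpot f i j a (!b))

/-- Conditional probability `P_{i|V}(x) = P(x(i) | x(V \ {i}))`, with the convention
that it equals `1/2` when the conditioning cylinder has probability `0`. -/
noncomputable def condProb {G : Type*} [DecidableEq G] (P : Measure (G → Bool)) (i : G)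
    (V : Finset G) (x : G → Bool) : ℝ :=
  if P {y | ∀ j ∈ V.erase i, y j = x j} = 0 then 1/2
  else (P {y | y i = x i ∧ ∀ j ∈ V.erase i, y j = x j}).toReal /
    (P {y | ∀ j ∈ V.erase i, y j = x j}).toReal



noncomputable def sig (t : ℝ) : ℝ := 1 / (1 + Real.exp (-t))

lemma sig_pos (t : ℝ) : 0 < sig t := by unfold sig; positivity

lemma sig_le_one (t : ℝ) : sig t ≤ 1 := by
  unfold sig
  rw [div_le_one (by positivity)]
  nlinarith [Real.exp_pos (-t)]

lemma sig_mono : Monotone sig := by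
  intro u v huv
  unfold sig
  apply one_div_le_one_div_of_le (by positivity)
  have := Real.exp_le_exp.2 (neg_le_neg huv)
  linarith

lemma sig_hasDerivAt (t : ℝ) :
    HasDerivAt sig (Real.exp (-t) / (1 + Real.exp (-t)) ^ 2) t := by
  have h1 : HasDerivAt (fun s : ℝ => -s) (-1) t := (hasDerivAt_id t).neg
  have h2 : HasDerivAt (fun s : ℝ => Real.exp (-s)) (Real.exp (-t) * (-1)) t := h1.exp
  have h3 : HasDerivAt (fun s : ℝ => 1 + Real.exp (-s)) (Real.exp (-t) * (-1)) t :=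
    h2.const_add 1
  have h4 := h3.inv (by positivity)
  have : sig = fun s : ℝ => (1 + Real.exp (-s))⁻¹ := by
    funext s; simp [sig, one_div]
  rw [this]
  exact h4.congr_deriv (by ring)

lemma sig_continuous : Continuous sig := by
  apply Continuous.div continuous_const
  · exact continuous_const.add (Real.continuous_exp.comp continuous_neg)
  · intro t; positivity

lemma sig_sub_bounds {B u v : ℝ} (huv : u ≤ v) (hu : -B ≤ u) (hv : v ≤ B) :
    Real.exp (-B) / (1 + Real.exp B) ^ 2 * (v - u) ≤ sig v - sig u ∧
      sig v - sig u ≤ v - u := by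
  rcases eq_or_lt_of_le huv with rfl | h
  · simp
  obtain ⟨c, hc, hceq⟩ := exists_hasDerivAt_eq_slope sig
    (fun s => Real.exp (-s) / (1 + Real.exp (-s)) ^ 2) h
    (sig_continuous.continuousOn) (fun s _ => sig_hasDerivAt s)
  have hcB : -B ≤ c ∧ c ≤ B := ⟨le_trans hu hc.1.le, le_trans hc.2.le hv⟩
  have hdlow : Real.exp (-B) / (1 + Real.exp B) ^ 2 ≤
      Real.exp (-c) / (1 + Real.exp (-c)) ^ 2 := by
    apply div_le_div₀ (Real.exp_pos _).le (Real.exp_le_exp.2 (by linarith [hcB.1])) (by positivity)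
    have h1 : Real.exp (-c) ≤ Real.exp B := Real.exp_le_exp.2 (by linarith [hcB.1])
    have : (1 : ℝ) + Real.exp (-c) ≤ 1 + Real.exp B := by linarith
    exact pow_le_pow_left₀ (by positivity) this 2
  have hdup : Real.exp (-c) / (1 + Real.exp (-c)) ^ 2 ≤ 1 := by
    rw [div_le_one (by positivity)]
    nlinarith [Real.exp_pos (-c)]
  have hvu : (0:ℝ) < v - u := by linarith
  have hkey : sig v - sig u = Real.exp (-c) / (1 + Real.exp (-c)) ^ 2 * (v - u) := by
    field_simp at hceq ⊢
    linarith [hceq]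
  constructor
  · rw [hkey]; exact mul_le_mul_of_nonneg_right hdlow hvu.le
  · rw [hkey]
    nlinarith [hdup, hvu]

section Aux
set_option linter.unusedSectionVars false
variable {G : Type*} [Countable G] [DecidableEq G]

/-- dominating summable sequence -/
noncomputable def mm (f : G → G → Bool → Bool → ℝ) (i : G) (a : Bool) (j : G) : ℝ :=
  max |f i j a true| |f i j a false| + max |f i j (!a) true| |f i j (!a) false|

lemma mm_nonneg (f : G → G → Bool → Bool → ℝ) (i : G) (a : Bool) (j : G) : 0 ≤ mm f i a j := by
  unfold mm
  have := abs_nonneg (f i j a true)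
  have := abs_nonneg (f i j (!a) true)
  have := le_max_left |f i j a true| |f i j a false|
  have := le_max_left |f i j (!a) true| |f i j (!a) false|
  linarith

lemma gpot_abs_le (f : G → G → Bool → Bool → ℝ) (i : G) (a : Bool) (j : G) (b : Bool) :
    |gpot f i j a b| ≤ mm f i a j := by
  unfold gpot mm
  have h1 : |f i j a b - f i j (!a) b| ≤ |f i j a b| + |f i j (!a) b| := abs_sub _ _
  have h2 : |f i j a b| ≤ max |f i j a true| |f i j a false| := by
    cases b
    · exact le_max_right _ _
    · exact le_max_left _ _
  have h3 : |f i j (!a) b| ≤ max |f i j (!a) true| |f i j (!a) false| := by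
    cases b
    · exact le_max_right _ _
    · exact le_max_left _ _
  linarith

variable {f : G → G → Bool → Bool → ℝ} {r : ℝ}

lemma summable_mm (hsum : ∀ (i : G) (a : Bool), Summable fun j => max |f i j a true| |f i j a false|)
    (i : G) (a : Bool) : Summable (mm f i a) := (hsum i a).add (hsum i (!a))

lemma tsum_mm_le (hsum : ∀ (i : G) (a : Bool), Summable fun j => max |f i j a true| |f i j a false|)
    (hrange : ∀ (i : G) (a : Bool), (∑' j, max |f i j a true| |f i j a false|) ≤ r)
    (i : G) (a : Bool) : ∑' j, mm f i a j ≤ 2 * r := by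
  unfold mm
  rw [Summable.tsum_add (hsum i a) (hsum i (!a))]
  have := hrange i a
  have := hrange i (!a)
  linarith

/-- summability of any selection -/
lemma summable_sel {u : G → ℝ} (hsum : Summable (mm f i a))
    (hb : ∀ j, |u j| ≤ mm f i a j) : Summable u :=
  Summable.of_abs (hsum.of_nonneg_of_le (fun j => abs_nonneg _) hb)

lemma abs_tsum_le_2r
    (hsum : ∀ (i : G) (a : Bool), Summable fun j => max |f i j a true| |f i j a false|)
    (hrange : ∀ (i : G) (a : Bool), (∑' j, max |f i j a true| |f i j a false|) ≤ r)
    {i : G} {a : Bool} {u : G → ℝ} (hb : ∀ j, |u j| ≤ mm f i a j) :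
    |∑' j, u j| ≤ 2 * r := by
  have hsu : Summable u := summable_sel (summable_mm hsum i a) hb
  have h1 : |∑' j, u j| ≤ ∑' j, |u j| := by
    have := norm_tsum_le_tsum_norm (f := u) (by simpa only [Real.norm_eq_abs] using hsu.abs)
    simpa only [Real.norm_eq_abs] using this
  have h2 : ∑' j, |u j| ≤ ∑' j, mm f i a j := Summable.tsum_le_tsum hb hsu.abs (summable_mm hsum i a)
  have h3 := tsum_mm_le hsum hrange i a
  linarith

/-- measurability of a real tsum of bounded measurable functions -/
lemma measurable_tsum_of_bounded {α : Type*} [MeasurableSpace α] [Nonempty α]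
    {g : G → α → ℝ} {m : G → ℝ} (hm : Summable m)
    (hb : ∀ j y, |g j y| ≤ m j) (hg : ∀ j, Measurable (g j)) :
    Measurable fun y => ∑' j, g j y := by
  have hmn : ∀ j, 0 ≤ m j := fun j => le_trans (abs_nonneg _) (hb j (Classical.arbitrary α))
  have hsx : ∀ y, Summable fun j => g j y :=
    fun y => Summable.of_abs (hm.of_nonneg_of_le (fun j => abs_nonneg _) (fun j => hb j y))
  have hsx2 : ∀ y, Summable fun j => g j y + m j := fun y => (hsx y).add hm
  have h0 : ∀ y j, 0 ≤ g j y + m j := by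
    intro y j
    have := neg_abs_le (g j y)
    have := hb j y
    linarith
  have key : (fun y => ∑' j, g j y) =
      fun y => (∑' j, ENNReal.ofReal (g j y + m j)).toReal - ∑' j, m j := by
    funext y
    rw [← ENNReal.ofReal_tsum_of_nonneg (h0 y) (hsx2 y),
      ENNReal.toReal_ofReal (tsum_nonneg (h0 y)), Summable.tsum_add (hsx y) hm]
    ring
  rw [key]
  apply Measurable.sub _ measurable_const
  apply Measurable.ennreal_toReal
  apply Measurable.ennreal_tsum
  intro j
  exact ((hg j).add_const _).ennreal_ofReal

lemma measurable_coord_fn {h : Bool → ℝ} (j : G) :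
    Measurable fun y : G → Bool => h (y j) :=
  (Measurable.of_discrete (f := h)).comp (measurable_pi_apply j)

lemma spec_eq_sig (i : G) (a : Bool) (y : G → Bool) :
    spec f i a y = sig (∑' j, gpot f i j a (y j)) := rfl

lemma measurable_spec
    (hsum : ∀ (i : G) (a : Bool), Summable fun j => max |f i j a true| |f i j a false|)
    (i : G) (a : Bool) : Measurable (spec f i a) := by
  have : Measurable fun y : G → Bool => ∑' j, gpot f i j a (y j) :=
    measurable_tsum_of_bounded (summable_mm hsum i a)
      (fun j y => gpot_abs_le f i a j (y j)) (fun j => measurable_coord_fn j)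
  have hc : Continuous sig := by
    apply Continuous.div continuous_const
    · exact continuous_const.add (Real.continuous_exp.comp continuous_neg)
    · intro t; positivity
  exact hc.measurable.comp this

lemma cyl_measurable (W : Finset G) (x : G → Bool) :
    MeasurableSet {y : G → Bool | ∀ j ∈ W, y j = x j} := by
  have : {y : G → Bool | ∀ j ∈ W, y j = x j} =
      ⋂ j ∈ (W : Set G), (fun y : G → Bool => y j) ⁻¹' {x j} := by
    ext y; simp
  rw [this]
  exact MeasurableSet.biInter W.countable_toSet
    (fun j _ => (measurable_pi_apply j) (measurableSet_singleton _))



lemma spec_lower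
    (hsum : ∀ (i : G) (a : Bool), Summable fun j => max |f i j a true| |f i j a false|)
    (hrange : ∀ (i : G) (a : Bool), (∑' j, max |f i j a true| |f i j a false|) ≤ r)
    (i : G) (a : Bool) (y : G → Bool) : sig (-(2*r)) ≤ spec f i a y := by
  rw [spec_eq_sig]
  apply sig_mono
  have := abs_tsum_le_2r hsum hrange (i := i) (a := a)
    (u := fun j => gpot f i j a (y j)) (fun j => gpot_abs_le f i a j (y j))
  have := abs_le.mp this
  linarith [this.1]

lemma spec_nonneg (i : G) (a : Bool) (y : G → Bool) : 0 ≤ spec f i a y := by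
  rw [spec_eq_sig]; exact (sig_pos _).le

lemma spec_le_one' (i : G) (a : Bool) (y : G → Bool) : spec f i a y ≤ 1 := by
  rw [spec_eq_sig]; exact sig_le_one _

variable {P : Measure (G → Bool)} [IsProbabilityMeasure P]

lemma integrableOn_spec
    (hsum : ∀ (i : G) (a : Bool), Summable fun j => max |f i j a true| |f i j a false|)
    (i : G) (a : Bool) (C : Set (G → Bool)) : IntegrableOn (spec f i a) C P := by
  apply Integrable.integrableOn
  refine ⟨(measurable_spec hsum i a).aestronglyMeasurable, ?_⟩
  apply HasFiniteIntegral.of_bounded (C := 1)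
  filter_upwards with y
  rw [Real.norm_eq_abs, abs_of_nonneg (spec_nonneg i a y)]
  exact spec_le_one' i a y

lemma cyl_indep (W : Finset G) (x : G → Bool) {j : G} (hj : j ∉ W) :
    ∀ y z : G → Bool, (∀ k, k ≠ j → y k = z k) →
      (y ∈ {y : G → Bool | ∀ k ∈ W, y k = x k} ↔ z ∈ {y : G → Bool | ∀ k ∈ W, y k = x k}) := by
  intro y z h
  constructor <;> intro hy k hk
  · rw [← h k (by rintro rfl; exact hj hk)]; exact hy k hk
  · rw [h k (by rintro rfl; exact hj hk)]; exact hy k hk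

lemma integral_coord_ge (hP : IsIsing f P)
    (hsum : ∀ (i : G) (a : Bool), Summable fun j => max |f i j a true| |f i j a false|)
    (hrange : ∀ (i : G) (a : Bool), (∑' j, max |f i j a true| |f i j a false|) ≤ r)
    (W : Finset G) (x : G → Bool) {j : G} (hj : j ∉ W) (b : Bool) :
    sig (-(2*r)) * (P {y : G → Bool | ∀ k ∈ W, y k = x k}).toReal ≤
      (P ({y : G → Bool | ∀ k ∈ W, y k = x k} ∩ {y | y j = b})).toReal := by
  set C := {y : G → Bool | ∀ k ∈ W, y k = x k}
  have hDLR := hP j C (cyl_measurable W x) (cyl_indep W x hj) b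
  have hint : sig (-(2*r)) * (P C).toReal ≤ ∫ y in C, spec f j b y ∂P := by
    have h1 : ∫ _ in C, sig (-(2*r)) ∂P = (P C).toReal * sig (-(2*r)) := by
      rw [setIntegral_const]; simp [smul_eq_mul, measureReal_def]
    calc sig (-(2*r)) * (P C).toReal = ∫ _ in C, sig (-(2*r)) ∂P := by rw [h1]; ring
    _ ≤ ∫ y in C, spec f j b y ∂P := by
        apply setIntegral_mono_on (integrableOn_const (measure_ne_top P C))
          (integrableOn_spec hsum j b C) (cyl_measurable W x)
        intro y _
        exact spec_lower hsum hrange j b y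
  rw [hDLR, ENNReal.toReal_ofReal]
  · exact hint
  · exact le_trans (mul_nonneg (sig_pos _).le ENNReal.toReal_nonneg) hint

lemma cyl_pos (hP : IsIsing f P)
    (hsum : ∀ (i : G) (a : Bool), Summable fun j => max |f i j a true| |f i j a false|)
    (hrange : ∀ (i : G) (a : Bool), (∑' j, max |f i j a true| |f i j a false|) ≤ r)
    (W : Finset G) (x : G → Bool) : P {y : G → Bool | ∀ k ∈ W, y k = x k} ≠ 0 := by
  induction W using Finset.induction with
  | empty => simp
  | @insert j W hjW ih =>
    have hsplit : {y : G → Bool | ∀ k ∈ insert j W, y k = x k} =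
        {y : G → Bool | ∀ k ∈ W, y k = x k} ∩ {y | y j = x j} := by
      ext y
      simp only [Set.mem_setOf_eq, Set.mem_inter_iff, Finset.mem_insert]
      constructor
      · intro h; exact ⟨fun k hk => h k (Or.inr hk), h j (Or.inl rfl)⟩
      · rintro ⟨h1, h2⟩ k (rfl | hk)
        · exact h2
        · exact h1 k hk
    rw [hsplit]
    have hge := integral_coord_ge hP hsum hrange W x hjW (x j)
    intro h0
    rw [h0, ENNReal.toReal_zero] at hge
    have hpos : 0 < (P {y : G → Bool | ∀ k ∈ W, y k = x k}).toReal := by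
      rw [ENNReal.toReal_pos_iff]
      exact ⟨pos_iff_ne_zero.mpr ih, measure_lt_top P _⟩
    nlinarith [sig_pos (-(2*r)), hpos, hge]

end Aux

-- auxiliary: configuration achieving a given selection off W
lemma exists_config {G : Type*} [Countable G] [DecidableEq G] {f : G → G → Bool → Bool → ℝ}
    (hdiag : ∀ (i : G) (a b : Bool), f i i a b = 0)
    (hsum : ∀ (i : G) (a : Bool), Summable fun j => max |f i j a true| |f i j a false|)
    (i : G) (a : Bool) (V : Finset G) (x : G → Bool)
    (e : G → ℝ) (t : G → Bool) (ht : ∀ j, gpot f i j a (t j) = e j) :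
    ∃ y : G → Bool, y i = a ∧
      ∑' j, gpot f i j a (y j) =
        (∑ j ∈ V.erase i, gpot f i j a (x j)) + ∑' (j : {j // j ∉ V.erase i}), e (j : G) := by
  classical
  have hg0 : ∀ b : Bool, gpot f i i a b = 0 := by
    intro b; unfold gpot; rw [hdiag, hdiag]; ring
  set W := V.erase i with hWdef
  have hiW : i ∉ W := Finset.notMem_erase i V
  refine ⟨fun j => if j ∈ W then x j else if j = i then a else t j, by simp [hiW], ?_⟩
  have he_abs : ∀ j, |e j| ≤ mm f i a j := fun j => ht j ▸ gpot_abs_le f i a j (t j)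
  have hpt : ∀ j, gpot f i j a (if j ∈ W then x j else if j = i then a else t j) =
      if j ∈ W then gpot f i j a (x j) else e j := by
    intro j
    by_cases hjW : j ∈ W
    · simp [hjW]
    · by_cases hji : j = i
      · subst hji
        simp only [if_neg hjW, if_pos rfl, hg0]
        rw [← ht j, hg0]
      · simp [hjW, hji, ht j]
  have hsummif : Summable fun j => if j ∈ W then gpot f i j a (x j) else e j := by
    apply summable_sel (f := f) (summable_mm hsum i a)
    intro j
    by_cases hjW : j ∈ W <;> simp [hjW, gpot_abs_le f i a j (x j), he_abs j]
  calc ∑' j, gpot f i j a (if j ∈ W then x j else if j = i then a else t j)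
      = ∑' j, (if j ∈ W then gpot f i j a (x j) else e j) := tsum_congr hpt
    _ = (∑ j ∈ W, if j ∈ W then gpot f i j a (x j) else e j) +
        ∑' (j : {j // j ∉ W}), (if (j : G) ∈ W then gpot f i (j : G) a (x (j : G)) else e (j : G)) :=
        (Summable.sum_add_tsum_subtype_compl hsummif W).symm
    _ = (∑ j ∈ W, gpot f i j a (x j)) + ∑' (j : {j // j ∉ W}), e (j : G) := by
        congr 1
        · exact Finset.sum_congr rfl fun j hj => if_pos hj
        · exact tsum_congr fun j => if_neg j.2

theorem ising_satisfies_H1 {G : Type*} [Countable G] [DecidableEq G]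
    (f : G → G → Bool → Bool → ℝ) (r : ℝ) (hr : 0 < r)
    (hdiag : ∀ (i : G) (a b : Bool), f i i a b = 0)
    (hsum : ∀ (i : G) (a : Bool), Summable fun j => max |f i j a true| |f i j a false|)
    (hrange : ∀ (i : G) (a : Bool), (∑' j, max |f i j a true| |f i j a false|) ≤ r)
    (P : Measure (G → Bool)) [IsProbabilityMeasure P] (hP : IsIsing f P)
    (i : G) :
    ∃ κ : ℝ, 0 < κ ∧ ∀ V : Finset G,
      κ * (⨆ x : G → Bool, |spec f i (x i) x - condProb P i V x|) ≤
        (⨆ x : G → Bool, spec f i (x i) x) - (⨆ x : G → Bool, condProb P i V x) := by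
  classical
  set ε := sig (-(2*r)) with hεdef
  set δ := Real.exp (-(2*r)) / (1 + Real.exp (2*r)) ^ 2 with hδdef
  have hεpos : 0 < ε := sig_pos _
  have hδpos : 0 < δ := by rw [hδdef]; positivity
  refine ⟨δ * ε, by positivity, ?_⟩
  intro V
  set M := ⨆ x : G → Bool, spec f i (x i) x with hMdef
  set MV := ⨆ x : G → Bool, condProb P i V x with hMVdef
  set W := V.erase i with hWdef
  have hiW : i ∉ W := Finset.notMem_erase i V
  -- local definitions
  set Mb : Bool → G → ℝ := fun a j => max (gpot f i j a true) (gpot f i j a false) with hMbdef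
  set mb : Bool → G → ℝ := fun a j => min (gpot f i j a true) (gpot f i j a false) with hmbdef
  set ww : G → ℝ := fun j => Mb true j - mb true j with hwwdef
  set sV : Bool → (G → Bool) → ℝ := fun a x => ∑ j ∈ W, gpot f i j a (x j) with hsVdef
  set tmax : Bool → ℝ := fun a => ∑' (j : {j // j ∉ W}), Mb a (j : G) with htmaxdef
  set tmin : Bool → ℝ := fun a => ∑' (j : {j // j ∉ W}), mb a (j : G) with htmindef
  set S := ∑' (j : {j // j ∉ W}), ww (j : G) with hSdef
  -- basic facts about Mb, mb, ww
  have hgneg : ∀ (j : G) (b : Bool), gpot f i j false b = -(gpot f i j true b) := by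
    intro j b; unfold gpot; simp only [Bool.not_false, Bool.not_true]; ring
  have hww_eq : ∀ (a : Bool) (j : G), Mb a j - mb a j = ww j := by
    intro a j
    cases a
    · simp only [hMbdef, hmbdef, hwwdef, hgneg j true, hgneg j false, max_neg_neg, min_neg_neg]
      ring
    · rfl
  have hww_nonneg : ∀ j : G, 0 ≤ ww j := by
    intro j; simp only [hwwdef]
    have := min_le_max (a := gpot f i j true true) (b := gpot f i j true false)
    linarith
  have hMb_abs : ∀ (a : Bool) (j : G), |Mb a j| ≤ mm f i a j := by
    intro a j
    rcases max_cases (gpot f i j a true) (gpot f i j a false) with ⟨h, _⟩ | ⟨h, _⟩ <;>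
      simp only [hMbdef, h] <;> exact gpot_abs_le f i a j _
  have hmb_abs : ∀ (a : Bool) (j : G), |mb a j| ≤ mm f i a j := by
    intro a j
    rcases min_cases (gpot f i j a true) (gpot f i j a false) with ⟨h, _⟩ | ⟨h, _⟩ <;>
      simp only [hmbdef, h] <;> exact gpot_abs_le f i a j _
  -- summability
  have hsummMb : ∀ a : Bool, Summable fun j : {j // j ∉ W} => Mb a (j : G) := fun a =>
    (summable_sel (summable_mm hsum i a) (hMb_abs a)).comp_injective Subtype.coe_injective
  have hsummmb : ∀ a : Bool, Summable fun j : {j // j ∉ W} => mb a (j : G) := fun a =>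
    (summable_sel (summable_mm hsum i a) (hmb_abs a)).comp_injective Subtype.coe_injective
  have hsummg : ∀ (a : Bool) (y : G → Bool), Summable fun j : {j // j ∉ W} => gpot f i (j : G) a (y (j : G)) :=
    fun a y => (summable_sel (summable_mm hsum i a) (fun j => gpot_abs_le f i a j (y j))).comp_injective
      Subtype.coe_injective
  have hsummww : Summable fun j : {j // j ∉ W} => ww (j : G) := by
    have h1 : Summable fun j : G => ww j := by
      apply Summable.of_abs
      apply Summable.of_nonneg_of_le (fun j => abs_nonneg _) (fun j => ?_)
        ((summable_mm hsum i true).mul_left 2)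
      have h2 := hMb_abs true j
      have h3 := hmb_abs true j
      calc |ww j| = |Mb true j - mb true j| := by rw [hwwdef]
        _ ≤ |Mb true j| + |mb true j| := abs_sub _ _
        _ ≤ 2 * mm f i true j := by linarith
    exact h1.comp_injective Subtype.coe_injective
  -- max/min configurations
  have hymax : ∀ (a : Bool) (x : G → Bool), ∃ y : G → Bool, y i = a ∧
      ∑' j, gpot f i j a (y j) = sV a x + tmax a := by
    intro a x
    have ht : ∀ j, gpot f i j a ((fun j => if gpot f i j a false ≤ gpot f i j a true then true
        else false) j) = Mb a j := by
      intro j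
      by_cases h : gpot f i j a false ≤ gpot f i j a true
      · simp only [if_pos h, hMbdef]; exact (max_eq_left h).symm
      · simp only [if_neg h, hMbdef]; exact (max_eq_right (not_le.mp h).le).symm
    obtain ⟨y, h1, h2⟩ := exists_config hdiag hsum i a V x (Mb a) _ ht
    exact ⟨y, h1, h2⟩
  have hymin : ∀ (a : Bool) (x : G → Bool), ∃ y : G → Bool, y i = a ∧
      ∑' j, gpot f i j a (y j) = sV a x + tmin a := by
    intro a x
    have ht : ∀ j, gpot f i j a ((fun j => if gpot f i j a false ≤ gpot f i j a true then false
        else true) j) = mb a j := by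
      intro j
      by_cases h : gpot f i j a false ≤ gpot f i j a true
      · simp only [if_pos h, hmbdef]; exact (min_eq_right h).symm
      · simp only [if_neg h, hmbdef]; exact (min_eq_left (not_le.mp h).le).symm
    obtain ⟨y, h1, h2⟩ := exists_config hdiag hsum i a V x (mb a) _ ht
    exact ⟨y, h1, h2⟩
  have hs_abs : ∀ (a : Bool) (y : G → Bool), |∑' j, gpot f i j a (y j)| ≤ 2 * r :=
    fun a y => abs_tsum_le_2r hsum hrange (fun j => gpot_abs_le f i a j (y j))
  have hbound1 : ∀ (a : Bool) (x : G → Bool), |sV a x + tmax a| ≤ 2 * r := by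
    intro a x
    obtain ⟨y, _, h2⟩ := hymax a x
    rw [← h2]; exact hs_abs a y
  have hbound2 : ∀ (a : Bool) (x : G → Bool), |sV a x + tmin a| ≤ 2 * r := by
    intro a x
    obtain ⟨y, _, h2⟩ := hymin a x
    rw [← h2]; exact hs_abs a y
  -- M lower bound
  have hbddM : BddAbove (Set.range fun x : G → Bool => spec f i (x i) x) :=
    ⟨1, by rintro _ ⟨x, rfl⟩; exact spec_le_one' i (x i) x⟩
  have hMge : ∀ (a : Bool) (x : G → Bool), sig (sV a x + tmax a) ≤ M := by
    intro a x
    obtain ⟨y, hyi, hyeq⟩ := hymax a x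
    have h1 : spec f i (y i) y = sig (sV a x + tmax a) := by
      rw [hyi, spec_eq_sig, hyeq]
    rw [hMdef, ← h1]
    exact le_ciSup hbddM y
  -- tail decomposition and bounds
  have hdec : ∀ (a : Bool) (x y : G → Bool), (∀ j ∈ W, y j = x j) →
      ∑' j, gpot f i j a (y j) =
        sV a x + ∑' (j : {j // j ∉ W}), gpot f i (j : G) a (y (j : G)) := by
    intro a x y hy
    rw [← Summable.sum_add_tsum_subtype_compl
      (summable_sel (f := f) (summable_mm hsum i a) (fun j => gpot_abs_le f i a j (y j))) W]
    congr 1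
    exact Finset.sum_congr rfl fun j hj => by rw [hy j hj]
  have hgle : ∀ (a : Bool) (y : G → Bool) (j : G), gpot f i j a (y j) ≤ Mb a j := by
    intro a y j
    cases hyj : y j
    · exact le_max_right _ _
    · exact le_max_left _ _
  have hgge : ∀ (a : Bool) (y : G → Bool) (j : G), mb a j ≤ gpot f i j a (y j) := by
    intro a y j
    cases hyj : y j
    · exact min_le_right _ _
    · exact min_le_left _ _
  have htail_le : ∀ (a : Bool) (y : G → Bool),
      (∑' (j : {j // j ∉ W}), gpot f i (j : G) a (y (j : G))) ≤ tmax a :=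
    fun a y => Summable.tsum_le_tsum (fun j => hgle a y j) (hsummg a y) (hsummMb a)
  have htail_ge : ∀ (a : Bool) (y : G → Bool),
      tmin a ≤ ∑' (j : {j // j ∉ W}), gpot f i (j : G) a (y (j : G)) :=
    fun a y => Summable.tsum_le_tsum (fun j => hgge a y j) (hsummmb a) (hsummg a y)
  have hSdiff : ∀ a : Bool, tmax a - tmin a = S := by
    intro a
    rw [htmaxdef, htmindef, hSdef, ← Summable.tsum_sub (hsummMb a) (hsummmb a)]
    exact tsum_congr fun j => hww_eq a (j : G)
  have htmm : ∀ a : Bool, tmin a ≤ tmax a := by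
    intro a
    exact le_trans (htail_ge a (fun _ => true)) (htail_le a (fun _ => true))
  -- conditional probability formula
  have hPC : ∀ x : G → Bool, P {y : G → Bool | ∀ j ∈ W, y j = x j} ≠ 0 :=
    fun x => cyl_pos hP hsum hrange W x
  have hPCpos : ∀ x : G → Bool, 0 < (P {y : G → Bool | ∀ j ∈ W, y j = x j}).toReal :=
    fun x => ENNReal.toReal_pos (hPC x) (measure_ne_top P _)
  have hN_nonneg : ∀ x : G → Bool,
      0 ≤ ∫ y in {y : G → Bool | ∀ j ∈ W, y j = x j}, spec f i (x i) y ∂P :=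
    fun x => setIntegral_nonneg (cyl_measurable W x) fun y _ => spec_nonneg i (x i) y
  have hcond : ∀ x : G → Bool, condProb P i V x =
      (∫ y in {y : G → Bool | ∀ j ∈ W, y j = x j}, spec f i (x i) y ∂P) /
        (P {y : G → Bool | ∀ j ∈ W, y j = x j}).toReal := by
    intro x
    have hDLR := hP i {y : G → Bool | ∀ j ∈ W, y j = x j} (cyl_measurable W x)
      (cyl_indep W x hiW) (x i)
    have hset : {y : G → Bool | y i = x i ∧ ∀ j ∈ W, y j = x j} =
        {y : G → Bool | ∀ j ∈ W, y j = x j} ∩ {y | y i = x i} := by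
      ext y
      simp only [Set.mem_setOf_eq, Set.mem_inter_iff]
      exact and_comm
    unfold condProb
    rw [← hWdef, if_neg (hPC x), hset, hDLR, ENNReal.toReal_ofReal (hN_nonneg x)]
  -- pointwise bounds on the cylinder
  have hspecC_le : ∀ (x y : G → Bool), (∀ j ∈ W, y j = x j) →
      spec f i (x i) y ≤ sig (sV (x i) x + tmax (x i)) := by
    intro x y hy
    rw [spec_eq_sig, hdec (x i) x y hy]
    exact sig_mono (by linarith [htail_le (x i) y])
  have hspecC_ge : ∀ (x y : G → Bool), (∀ j ∈ W, y j = x j) →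
      sig (sV (x i) x + tmin (x i)) ≤ spec f i (x i) y := by
    intro x y hy
    rw [spec_eq_sig, hdec (x i) x y hy]
    exact sig_mono (by linarith [htail_ge (x i) y])
  have hcond_le : ∀ x : G → Bool, condProb P i V x ≤ sig (sV (x i) x + tmax (x i)) := by
    intro x
    rw [hcond x, div_le_iff₀ (hPCpos x)]
    calc ∫ y in {y : G → Bool | ∀ j ∈ W, y j = x j}, spec f i (x i) y ∂P
        ≤ ∫ _ in {y : G → Bool | ∀ j ∈ W, y j = x j}, sig (sV (x i) x + tmax (x i)) ∂P := by
          apply setIntegral_mono_on (integrableOn_spec hsum i (x i) _)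
            (integrableOn_const (measure_ne_top P _)) (cyl_measurable W x)
          exact fun y hy => hspecC_le x y hy
      _ = sig (sV (x i) x + tmax (x i)) * (P {y : G → Bool | ∀ j ∈ W, y j = x j}).toReal := by
          rw [setIntegral_const]; rw [smul_eq_mul]; rw [measureReal_def]; ring
  have hcond_ge : ∀ x : G → Bool, sig (sV (x i) x + tmin (x i)) ≤ condProb P i V x := by
    intro x
    rw [hcond x, le_div_iff₀ (hPCpos x)]
    calc sig (sV (x i) x + tmin (x i)) * (P {y : G → Bool | ∀ j ∈ W, y j = x j}).toReal
        = ∫ _ in {y : G → Bool | ∀ j ∈ W, y j = x j}, sig (sV (x i) x + tmin (x i)) ∂P := by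
          rw [setIntegral_const]; rw [smul_eq_mul]; rw [measureReal_def]; ring
      _ ≤ ∫ y in {y : G → Bool | ∀ j ∈ W, y j = x j}, spec f i (x i) y ∂P := by
          apply setIntegral_mono_on
            (integrableOn_const (measure_ne_top P _))
            (integrableOn_spec hsum i (x i) _) (cyl_measurable W x)
          exact fun y hy => hspecC_ge x y hy
  -- sup of |spec - condProb| is at most S
  have habs : ∀ x : G → Bool, |spec f i (x i) x - condProb P i V x| ≤ S := by
    intro x
    have hxC : ∀ j ∈ W, x j = x j := fun _ _ => rfl
    have h1 := hspecC_le x x hxC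
    have h2 := hspecC_ge x x hxC
    have h3 := hcond_le x
    have h4 := hcond_ge x
    have h5 : sig (sV (x i) x + tmax (x i)) - sig (sV (x i) x + tmin (x i)) ≤
        (sV (x i) x + tmax (x i)) - (sV (x i) x + tmin (x i)) := by
      have habs1 := abs_le.mp (hbound1 (x i) x)
      have habs2 := abs_le.mp (hbound2 (x i) x)
      exact (sig_sub_bounds (by linarith [htmm (x i)]) habs2.1 habs1.2).2
    have h6 : (sV (x i) x + tmax (x i)) - (sV (x i) x + tmin (x i)) = S := by
      rw [← hSdiff (x i)]; ring
    rw [abs_le]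
    constructor <;> nlinarith [h1, h2, h3, h4, h5, h6]
  have hsup1 : (⨆ x : G → Bool, |spec f i (x i) x - condProb P i V x|) ≤ S :=
    ciSup_le habs
  -- the gap estimate
  have hgap : ∀ F : Finset {j // j ∉ W}, MV ≤ M - δ * ε * ∑ j ∈ F, ww (j : G) := by
    intro F
    rw [hMVdef]
    apply ciSup_le
    intro x
    -- argmin spins
    have hbm : ∀ j : {j // j ∉ W}, ∃ b : Bool, gpot f i (j : G) (x i) b = mb (x i) (j : G) := by
      intro j
      by_cases h : gpot f i (j : G) (x i) false ≤ gpot f i (j : G) (x i) true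
      · exact ⟨false, (min_eq_right h).symm⟩
      · exact ⟨true, (min_eq_left (not_le.mp h).le).symm⟩
    choose bm hbmspec using hbm
    -- pointwise bound on the cylinder
    have hpt : ∀ y ∈ {y : G → Bool | ∀ j ∈ W, y j = x j},
        spec f i (x i) y ≤ sig (sV (x i) x + tmax (x i)) -
          δ * ∑ j ∈ F, ww (j : G) *
            ({y : G → Bool | y (j : G) = bm j}).indicator (fun _ => (1:ℝ)) y := by
      intro y hy
      have hdecy := hdec (x i) x y hy
      set T := ∑' (j : {j // j ∉ W}), gpot f i (j : G) (x i) (y (j : G)) with hTdef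
      have hTle := htail_le (x i) y
      have hargabs : |sV (x i) x + T| ≤ 2 * r := by rw [hTdef, ← hdecy]; exact hs_abs (x i) y
      have habs1 := abs_le.mp (hbound1 (x i) x)
      have habs2 := abs_le.mp hargabs
      have h1 := (sig_sub_bounds (u := sV (x i) x + T) (v := sV (x i) x + tmax (x i))
        (by linarith) habs2.1 habs1.2).1
      rw [← hδdef] at h1
      have hvu : (sV (x i) x + tmax (x i)) - (sV (x i) x + T) = tmax (x i) - T := by ring
      rw [hvu] at h1
      have h2 : (∑ j ∈ F, (Mb (x i) (j : G) - gpot f i (j : G) (x i) (y (j : G)))) ≤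
          tmax (x i) - T := by
        rw [hTdef, ← Summable.tsum_sub (hsummMb (x i)) (hsummg (x i) y)]
        exact Summable.sum_le_tsum F (fun j _ => sub_nonneg.2 (hgle (x i) y (j : G)))
          ((hsummMb (x i)).sub (hsummg (x i) y))
      have h3 : ∀ j ∈ F, ww (j : G) *
          ({y : G → Bool | y (j : G) = bm j}).indicator (fun _ => (1:ℝ)) y ≤
          Mb (x i) (j : G) - gpot f i (j : G) (x i) (y (j : G)) := by
        intro j _
        by_cases hyj : y (j : G) = bm j
        · rw [Set.indicator_of_mem (show y ∈ {y : G → Bool | y (j : G) = bm j} from hyj)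
            (fun _ => (1:ℝ)), mul_one, hyj, hbmspec j, hww_eq (x i) (j : G)]
        · rw [Set.indicator_of_notMem
            (show y ∉ {y : G → Bool | y (j : G) = bm j} from hyj) (fun _ => (1:ℝ)), mul_zero]
          exact sub_nonneg.2 (hgle (x i) y (j : G))
      have h4 := Finset.sum_le_sum h3
      have h5 : δ * (∑ j ∈ F, ww (j : G) *
          ({y : G → Bool | y (j : G) = bm j}).indicator (fun _ => (1:ℝ)) y) ≤
          δ * (tmax (x i) - T) := mul_le_mul_of_nonneg_left (h4.trans h2) hδpos.le
      have hspec_eq : spec f i (x i) y = sig (sV (x i) x + T) := by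
        rw [spec_eq_sig, hdecy]
      rw [hspec_eq]
      linarith
    -- integrability
    have hmeasA : ∀ j : {j // j ∉ W}, MeasurableSet {y : G → Bool | y (j : G) = bm j} := by
      intro j
      have heq : {y : G → Bool | y (j : G) = bm j} =
          (fun y : G → Bool => y (j : G)) ⁻¹' {bm j} := by ext y; simp
      rw [heq]
      exact measurable_pi_apply (j : G) (measurableSet_singleton _)
    have hIind : ∀ j : {j // j ∉ W}, Integrable
        (fun y => ww (j : G) * ({y : G → Bool | y (j : G) = bm j}).indicator (fun _ => (1:ℝ)) y)
        (P.restrict {y : G → Bool | ∀ j ∈ W, y j = x j}) := by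
      intro j
      exact (((integrable_const (1:ℝ)).indicator (hmeasA j)).restrict).const_mul _
    have hIsum := (integrable_finset_sum F (fun j _ => hIind j)).const_mul δ
    have hNle := setIntegral_mono_on (integrableOn_spec hsum i (x i) _)
      ((integrableOn_const (measure_ne_top P _)).sub hIsum)
      (cyl_measurable W x) hpt
    -- evaluate the integral of the upper bound
    have hval : (∫ y in {y : G → Bool | ∀ j ∈ W, y j = x j},
          (sig (sV (x i) x + tmax (x i)) - δ * ∑ j ∈ F, ww (j : G) *
            ({y : G → Bool | y (j : G) = bm j}).indicator (fun _ => (1:ℝ)) y) ∂P) =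
        sig (sV (x i) x + tmax (x i)) * (P {y : G → Bool | ∀ j ∈ W, y j = x j}).toReal -
          δ * ∑ j ∈ F, ww (j : G) *
            (P ({y : G → Bool | ∀ j ∈ W, y j = x j} ∩ {y | y (j : G) = bm j})).toReal := by
      rw [integral_sub (integrableOn_const (C := sig (sV (x i) x + tmax (x i))) (measure_ne_top P _)) hIsum]
      rw [setIntegral_const, smul_eq_mul, measureReal_def, integral_const_mul,
        integral_finset_sum F (fun j _ => hIind j)]
      congr 1
      · ring
      · congr 1
        apply Finset.sum_congr rfl
        intro j _
        rw [integral_const_mul, setIntegral_indicator (hmeasA j), setIntegral_const,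
          smul_eq_mul, mul_one, measureReal_def]
    -- coordinate lower bound
    have hcoord : ∀ j ∈ F, ε * (P {y : G → Bool | ∀ j ∈ W, y j = x j}).toReal ≤
        (P ({y : G → Bool | ∀ j ∈ W, y j = x j} ∩ {y | y (j : G) = bm j})).toReal := by
      intro j _
      have h := integral_coord_ge hP hsum hrange W x j.2 (bm j)
      rw [← hεdef] at h
      exact h
    have hsum3 : ∑ j ∈ F, ww (j : G) *
          (ε * (P {y : G → Bool | ∀ j ∈ W, y j = x j}).toReal) ≤
        ∑ j ∈ F, ww (j : G) *
          (P ({y : G → Bool | ∀ j ∈ W, y j = x j} ∩ {y | y (j : G) = bm j})).toReal :=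
      Finset.sum_le_sum fun j hj => mul_le_mul_of_nonneg_left (hcoord j hj) (hww_nonneg _)
    have hfact : ∑ j ∈ F, ww (j : G) *
          (ε * (P {y : G → Bool | ∀ j ∈ W, y j = x j}).toReal) =
        (∑ j ∈ F, ww (j : G)) * (ε * (P {y : G → Bool | ∀ j ∈ W, y j = x j}).toReal) :=
      (Finset.sum_mul _ _ _).symm
    rw [hcond x, div_le_iff₀ (hPCpos x)]
    have hMx := hMge (x i) x
    have hPCnn := (hPCpos x).le
    have hNle2 : (∫ y in {y : G → Bool | ∀ j ∈ W, y j = x j}, spec f i (x i) y ∂P) ≤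
        sig (sV (x i) x + tmax (x i)) * (P {y : G → Bool | ∀ j ∈ W, y j = x j}).toReal -
          δ * ∑ j ∈ F, ww (j : G) *
            (P ({y : G → Bool | ∀ j ∈ W, y j = x j} ∩ {y | y (j : G) = bm j})).toReal :=
      hNle.trans (le_of_eq hval)
    calc (∫ y in {y : G → Bool | ∀ j ∈ W, y j = x j}, spec f i (x i) y ∂P)
        ≤ sig (sV (x i) x + tmax (x i)) * (P {y : G → Bool | ∀ j ∈ W, y j = x j}).toReal -
            δ * ∑ j ∈ F, ww (j : G) *
              (ε * (P {y : G → Bool | ∀ j ∈ W, y j = x j}).toReal) := by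
          nlinarith [mul_le_mul_of_nonneg_left hsum3 hδpos.le, hNle2]
      _ = (sig (sV (x i) x + tmax (x i)) - δ * ε * ∑ j ∈ F, ww (j : G)) *
            (P {y : G → Bool | ∀ j ∈ W, y j = x j}).toReal := by
          rw [hfact]; ring
      _ ≤ (M - δ * ε * ∑ j ∈ F, ww (j : G)) *
            (P {y : G → Bool | ∀ j ∈ W, y j = x j}).toReal := by
          apply mul_le_mul_of_nonneg_right _ hPCnn
          linarith
  -- conclusion
  have hkey : δ * ε * S ≤ M - MV := by
    have hδε : (0:ℝ) < δ * ε := by positivity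
    have h1 : ∀ F : Finset {j // j ∉ W}, ∑ j ∈ F, ww (j : G) ≤ (M - MV) / (δ * ε) := by
      intro F
      rw [le_div_iff₀ hδε]
      have := hgap F
      nlinarith [hgap F]
    have h2 : S ≤ (M - MV) / (δ * ε) := Summable.tsum_le_of_sum_le hsummww h1
    calc δ * ε * S ≤ δ * ε * ((M - MV) / (δ * ε)) := by
          exact mul_le_mul_of_nonneg_left h2 hδε.le
      _ = M - MV := by field_simp
  calc δ * ε * (⨆ x : G → Bool, |spec f i (x i) x - condProb P i V x|)
      ≤ δ * ε * S := mul_le_mul_of_nonneg_left hsup1 (by positivity)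
    _ ≤ M - MV := hkey
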